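/- Let G be a nilpotent group of nilpotency class c ≥ 2 generated by two elements R and L with L² = 1. Then the subgroup H = ⟨R, L⁻¹RL⟩ is nilpotent of nilpotency class at most c − 1. -/

import Mathlib

open scoped commutatorElement

/-- Elements of the closure of a pairwise-commuting set commute. -/
lemma commute_of_mem_closure {G : Type*} [Group G] {s : Set G}
    (hs : ∀ a ∈ s, ∀ b ∈ s, Commute a b) {x y : G}
    (hx : x ∈ Subgroup.closure s) (hy : y ∈ Subgroup.closure s) : Commute x y := by
  have h1 : Subgroup.closure s ≤ Subgroup.centralizer s := by
    rw [Subgroup.closure_le]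
    intro a ha
    rw [SetLike.mem_coe, Subgroup.mem_centralizer_iff]
    intro b hb
    exact (hs a ha b hb).symm
  have h2 : Subgroup.closure s ≤ Subgroup.centralizer (Subgroup.centralizer s : Set G) :=
    Subgroup.closure_le_centralizer_centralizer s
  have h3 : Subgroup.closure s ≤ Subgroup.centralizer (Subgroup.closure s : Set G) :=
    h2.trans (Subgroup.centralizer_le (fun a ha => h1 ha))
  have := Subgroup.mem_centralizer_iff.mp (h3 hx) y hy
  exact this.symm

theorem map_lcs_le {G : Type*} [Group G] (K : Subgroup G)
    (hKK : ⁅K, K⁆ ≤ lowerCentralSeries (⊤ : Subgroup G) 2) :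
    ∀ k : ℕ, (lowerCentralSeries (⊤ : Subgroup K) (k + 1)).map K.subtype ≤ lowerCentralSeries (⊤ : Subgroup G) (k + 2) := by
  intro k
  induction k with
  | zero =>
    have : Subgroup.map K.subtype (lowerCentralSeries (⊤ : Subgroup K) 1) = ⁅K, K⁆ := by
      show Subgroup.map K.subtype ⁅(⊤ : Subgroup K), (⊤ : Subgroup K)⁆ = ⁅K, K⁆
      rw [Subgroup.map_commutator, ← MonoidHom.range_eq_map, K.range_subtype]
    rw [this]
    exact hKK
  | succ k ih =>
    show Subgroup.map K.subtype ⁅lowerCentralSeries (⊤ : Subgroup K) (k + 1), (⊤ : Subgroup K)⁆ ≤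
      ⁅lowerCentralSeries (⊤ : Subgroup G) (k + 2), ⊤⁆
    rw [Subgroup.map_commutator]
    exact Subgroup.commutator_mono ih le_top

/-- If `G` is nilpotent of class `c ≥ 2` and is generated by `R, L` with
`L² = 1`, then `H = ⟨R, L⁻¹RL⟩` is nilpotent (as a subgroup of `G`) of class at most
`c − 1`. -/
theorem stmt16 {G : Type*} [Group G] [Group.IsNilpotent G]
    (c : ℕ) (hc : 2 ≤ c) (hclass : Group.nilpotencyClass G = c)
    (R L : G) (hL : L ^ 2 = 1) (hgen : Subgroup.closure ({R, L} : Set G) = ⊤) :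
    Group.nilpotencyClass ↥(Subgroup.closure ({R, L⁻¹ * R * L} : Set G)) ≤ c - 1 := by
  set K : Subgroup G := Subgroup.closure ({R, L⁻¹ * R * L} : Set G) with hK
  -- Key computation: ⁅R, L⁻¹RL⁆ ∈ γ₃(G) = lowerCentralSeries (⊤ : Subgroup G) 2.
  have key : ⁅R, L⁻¹ * R * L⁆ ∈ lowerCentralSeries (⊤ : Subgroup G) 2 := by
    have h1 : ⁅⁅L⁻¹, R⁆, R⁆ ∈ lowerCentralSeries (⊤ : Subgroup G) 2 :=
      Subgroup.commutator_mem_commutator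
        (Subgroup.commutator_mem_commutator (Subgroup.mem_top _) (Subgroup.mem_top _))
        (Subgroup.mem_top _)
    have h2 : ⁅R, L⁻¹ * R * L⁆ = ⁅⁅L⁻¹, R⁆, R⁆⁻¹ := by
      simp only [commutatorElement_def]
      group
    rw [h2]
    exact inv_mem h1
  -- Hence ⁅K, K⁆ ≤ lowerCentralSeries (⊤ : Subgroup G) 2, working in the quotient.
  have hKK : ⁅K, K⁆ ≤ lowerCentralSeries (⊤ : Subgroup G) 2 := by
    set N := lowerCentralSeries (⊤ : Subgroup G) 2 with hN
    have hNn : N.Normal := Subgroup.lowerCentralSeries_normal _ 2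
    rw [Subgroup.commutator_le]
    intro g₁ hg₁ g₂ hg₂
    let f : G →* G ⧸ N := QuotientGroup.mk' N
    have hf : ∀ x : G, f x = 1 ↔ x ∈ N := fun x => QuotientGroup.eq_one_iff x
    suffices h : Commute (f g₁) (f g₂) by
      rw [← hf]
      show f ⁅g₁, g₂⁆ = 1
      rw [map_commutatorElement]
      exact commutatorElement_eq_one_iff_commute.mpr h
    have hmap : ∀ x ∈ K, f x ∈ Subgroup.closure ({f R, f (L⁻¹ * R * L)} : Set (G ⧸ N)) := by
      intro x hx
      have := Subgroup.map_mono (f := f) (le_of_eq hK.symm) (Subgroup.mem_map_of_mem f hx)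
      rw [MonoidHom.map_closure] at this
      simpa [Set.image_insert_eq] using this
    refine commute_of_mem_closure ?_ (hmap g₁ hg₁) (hmap g₂ hg₂)
    have hcomm : Commute (f R) (f (L⁻¹ * R * L)) := by
      rw [← commutatorElement_eq_one_iff_commute, ← map_commutatorElement, hf]
      exact key
    rintro a (rfl | rfl) b (rfl | rfl)
    · exact Commute.refl _
    · exact hcomm
    · exact hcomm.symm
    · exact Commute.refl _
  -- The lower central series of K sits one step deeper in that of G.
  obtain ⟨d, rfl⟩ : ∃ d, c = d + 2 := ⟨c - 2, by omega⟩
  have hbot : lowerCentralSeries (⊤ : Subgroup G) (d + 2) = ⊥ := by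
    rw [← hclass]
    exact lowerCentralSeries_nilpotencyClass
  have hle : (lowerCentralSeries (⊤ : Subgroup K) (d + 1)).map K.subtype ≤ ⊥ := by
    rw [← hbot]
    exact map_lcs_le K hKK d
  have hKbot : lowerCentralSeries (⊤ : Subgroup K) (d + 1) = ⊥ := by
    have h := le_bot_iff.mp hle
    rwa [Subgroup.map_eq_bot_iff, Subgroup.ker_subtype, le_bot_iff] at h
  have := lowerCentralSeries_eq_bot_iff_nilpotencyClass_le.mp hKbot
  omega
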